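/- arXiv:quant-ph/9810091 — 2 statements merged into one kernel-verified Lean document; each statement's English description precedes it below -/
import Mathlib

section
/- Let S = {|α_i⟩⊗|β_i⟩} be a UPB in H_A ⊗ H_B and ρ the normalized projector onto H_S^⊥. Then (id_A ⊗ T)(ρ) is positive semidefinite, where T is transposition on B(H_B) with respect to a fixed orthonormal basis. -/
open scoped BigOperators ComplexConjugate ComplexOrder

noncomputable section

def inC {ι : Type*} [Fintype ι] (x y : ι → ℂ) : ℂ := ∑ i, conj (x i) * y i

def prodVec {ι κ : Type*} (a : ι → ℂ) (b : κ → ℂ) : ι × κ → ℂ := fun p => a p.1 * b p.2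

def outer {ι : Type*} (x : ι → ℂ) : Matrix ι ι ℂ := Matrix.vecMulVec x (star x)

def ONFam {σ ι : Type*} [DecidableEq σ] [Fintype ι] (f : σ → ι → ℂ) : Prop :=
  ∀ i j, inC (f i) (f j) = if i = j then 1 else 0

def IsUPB {σ ιA ιB : Type*} [DecidableEq σ] [Fintype σ] [Fintype ιA] [Fintype ιB]
    (α : σ → ιA → ℂ) (β : σ → ιB → ℂ) : Prop :=
  ONFam (fun i => prodVec (α i) (β i)) ∧
  Submodule.span ℂ (Set.range fun i => prodVec (α i) (β i)) ≠ ⊤ ∧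
  ∀ (a : ιA → ℂ) (b : ιB → ℂ), a ≠ 0 → b ≠ 0 →
    (∀ i, inC (prodVec (α i) (β i)) (prodVec a b) = 0) → False

/-- Partial transpose on the second tensor factor (in the standard basis). -/
def ptrB {ιA ιB : Type*} (ρ : Matrix (ιA × ιB) (ιA × ιB) ℂ) :
    Matrix (ιA × ιB) (ιA × ιB) ℂ :=
  Matrix.of fun p q => ρ (p.1, q.2) (q.1, p.2)

open Matrix in
lemma placeholder_unused : True := trivial

open Matrix

lemma inC_prodVec {ιA ιB : Type*} [Fintype ιA] [Fintype ιB]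
    (a c : ιA → ℂ) (b d : ιB → ℂ) :
    inC (prodVec a b) (prodVec c d) = inC a c * inC b d := by
  simp only [inC, prodVec, Finset.sum_mul_sum, Fintype.sum_prod_type]
  refine Finset.sum_congr rfl fun i _ => Finset.sum_congr rfl fun k _ => ?_
  simp only [_root_.map_mul]; ring

lemma inC_conj {ι : Type*} [Fintype ι] (b d : ι → ℂ) :
    inC (fun k => conj (b k)) (fun k => conj (d k)) = conj (inC b d) := by
  simp only [inC, map_sum, _root_.map_mul, RingHom.id_apply, Complex.conj_conj]

lemma onfam_conj {s m n : ℕ} (α : Fin s → Fin m → ℂ) (β : Fin s → Fin n → ℂ)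
    (h : ONFam fun i => prodVec (α i) (β i)) :
    ONFam fun i => prodVec (α i) (fun k => conj (β i k)) := by
  intro i j
  have hij := h i j
  rw [inC_prodVec] at hij
  rw [inC_prodVec, inC_conj]
  by_cases hc : i = j
  · subst hc
    simp only [if_true] at hij ⊢
    have hreal : conj (inC (β i) (β i)) = inC (β i) (β i) := by
      simp only [inC, map_sum, _root_.map_mul, RingHom.id_apply, Complex.conj_conj]
      exact Finset.sum_congr rfl fun k _ => mul_comm _ _
    rw [hreal]; exact hij
  · simp only [hc, if_false] at hij ⊢
    rcases mul_eq_zero.mp hij with h1 | h2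
    · rw [h1, zero_mul]
    · rw [h2, map_zero, mul_zero]

lemma outer_mul_outer {ι : Type*} [Fintype ι] (x y : ι → ℂ) :
    outer x * outer y = inC x y • Matrix.vecMulVec x (star y) := by
  ext p q
  simp only [outer, Matrix.mul_apply, Matrix.vecMulVec_apply, Matrix.smul_apply,
    Pi.star_apply, RCLike.star_def, smul_eq_mul, inC, Finset.sum_mul]
  exact Finset.sum_congr rfl fun r _ => by ring

lemma proj_sq {σ ι : Type*} [Fintype σ] [DecidableEq σ] [Fintype ι]
    (v : σ → ι → ℂ) (h : ONFam v) :
    (∑ i, outer (v i)) * (∑ i, outer (v i)) = ∑ i, outer (v i) := by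
  rw [Finset.sum_mul]
  refine Finset.sum_congr rfl fun i _ => ?_
  rw [Finset.mul_sum]
  have : ∀ j, outer (v i) * outer (v j) =
      if i = j then Matrix.vecMulVec (v i) (star (v j)) else 0 := by
    intro j
    rw [outer_mul_outer, h i j]
    split_ifs <;> simp
  simp only [this, Finset.sum_ite_eq, Finset.mem_univ, if_true]
  rfl

lemma outer_herm {ι : Type*} (x : ι → ℂ) : (outer x)ᴴ = outer x := by
  ext p q
  simp only [outer, Matrix.conjTranspose_apply, Matrix.vecMulVec_apply, Pi.star_apply,
    RCLike.star_def, _root_.map_mul, Complex.conj_conj]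
  ring

/-- the partial transpose of the UPB state is positive semidefinite. -/
theorem upb_state_ppt
    (m n s : ℕ) (α : Fin s → Fin m → ℂ) (β : Fin s → Fin n → ℂ)
    (hUPB : IsUPB α β) (hs : s < m * n)
    (ρ : Matrix (Fin m × Fin n) (Fin m × Fin n) ℂ)
    (hρ : ρ = ((m * n - s : ℕ) : ℂ)⁻¹ • (1 - ∑ i, outer (prodVec (α i) (β i)))) :
    (ptrB ρ).PosSemidef := by
  set c : ℂ := ((m * n - s : ℕ) : ℂ)⁻¹ with hc
  set v : Fin s → (Fin m × Fin n) → ℂ :=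
    fun i => prodVec (α i) (fun k => conj (β i k)) with hv
  have hON' : ONFam v := onfam_conj α β hUPB.1
  -- compute the partial transpose
  have hpe : ptrB ρ = c • (1 - ∑ i, outer (v i)) := by
    subst hρ
    ext p q
    simp only [ptrB, Matrix.of_apply, Matrix.smul_apply, Matrix.sub_apply, Matrix.one_apply,
      Matrix.sum_apply, outer, Matrix.vecMulVec_apply, prodVec, Pi.star_apply,
      RCLike.star_def, _root_.map_mul, Complex.conj_conj, smul_eq_mul, Prod.ext_iff, hv]
    congr 1
    congr 1
    · by_cases h1 : p.1 = q.1 <;> by_cases h2 : p.2 = q.2 <;>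
        simp [h1, h2, eq_comm]
    · exact Finset.sum_congr rfl fun i _ => by ring
  rw [hpe]
  set Q : Matrix (Fin m × Fin n) (Fin m × Fin n) ℂ := 1 - ∑ i, outer (v i) with hQ
  have hQherm : Qᴴ = Q := by
    simp only [hQ, Matrix.conjTranspose_sub, Matrix.conjTranspose_one]
    congr 1
    rw [Matrix.conjTranspose_sum]
    exact Finset.sum_congr rfl fun i _ => outer_herm _
  have hQsq : Q * Q = Q := by
    simp only [hQ, Matrix.sub_mul, Matrix.mul_sub, Matrix.one_mul, Matrix.mul_one,
      proj_sq v hON']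
    abel
  have hQps : Q.PosSemidef := by
    have : Q = Qᴴ * Q := by rw [hQherm, hQsq]
    rw [this]
    exact Matrix.posSemidef_conjTranspose_mul_self Q
  have hcreal : conj c = c := by
    simp [hc, map_inv₀]
  have hcpos : 0 ≤ c := by
    rw [hc, show ((m * n - s : ℕ) : ℂ) = (((m * n - s : ℕ) : ℝ) : ℂ) by push_cast; ring,
      ← Complex.ofReal_inv]
    rw [Complex.zero_le_real]
    positivity
  constructor
  · unfold Matrix.IsHermitian
    rw [Matrix.conjTranspose_smul, hQherm]
    simp [hcreal]
  · intro x
    have := hQps.2 x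
    have heq : (x.sum fun i xi => x.sum fun j xj => star xi * (c • Q) i j * xj) =
        c * (x.sum fun i xi => x.sum fun j xj => star xi * Q i j * xj) := by
      simp only [Finsupp.sum, Finset.mul_sum, Matrix.smul_apply, smul_eq_mul]
      exact Finset.sum_congr rfl fun i _ => Finset.sum_congr rfl fun j _ => by ring
    rw [heq]
    exact mul_nonneg hcpos this
end
end

section
/- Let S = {|α_i⟩⊗|β_i⟩}_{i=1}^{|S|} be a UPB in H_A ⊗ H_B, d = min(dim H_A, dim H_B), ε = min over unit product vectors of Σ_i |⟨φ_A|α_i⟩|²|⟨φ_B|β_i⟩|² (which is > 0), and |Ψ⟩ a maximally entangled state. Define H = Σ_i |α_i⟩⟨α_i| ⊗ |β_i⟩⟨β_i| − dε |Ψ⟩⟨Ψ|. Then for all unit product states |φ_A⟩⊗|φ_B⟩, ⟨φ_A ⊗ φ_B| H |φ_A ⊗ φ_B⟩ ≥ 0. -/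
open scoped BigOperators ComplexConjugate

noncomputable section

/-- A maximally entangled state: Schmidt form `(1/√d) Σ_{i<d} a_i ⊗ b_i` with
orthonormal families, `d = min m n`. -/
def MaxEnt {m n : ℕ} (Ψ : Fin m × Fin n → ℂ) : Prop :=
  ∃ (a : Fin (min m n) → Fin m → ℂ) (b : Fin (min m n) → Fin n → ℂ),
    ONFam a ∧ ONFam b ∧
    Ψ = fun p => ((Real.sqrt (min m n) : ℝ) : ℂ)⁻¹ * (∑ i, prodVec (a i) (b i)) p

lemma inC_conj_s8 {ι : Type*} [Fintype ι] (x y : ι → ℂ) : inC x y = conj (inC y x) := by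
  simp [inC, mul_comm]

lemma inC_prod {ι κ : Type*} [Fintype ι] [Fintype κ] (a c : ι → ℂ) (b d : κ → ℂ) :
    inC (prodVec a b) (prodVec c d) = inC a c * inC b d := by
  rw [inC, inC, inC, Finset.sum_mul_sum]
  rw [Fintype.sum_prod_type]
  refine Finset.sum_congr rfl fun i _ => Finset.sum_congr rfl fun j _ => ?_
  simp [prodVec]; ring

lemma inC_eq_inner {ι : Type*} [Fintype ι] (x y : ι → ℂ) :
    inC x y = inner ℂ ((WithLp.equiv 2 (ι → ℂ)).symm x) ((WithLp.equiv 2 (ι → ℂ)).symm y) := by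
  simp [inC, PiLp.inner_apply, RCLike.inner_apply, mul_comm]

lemma quad {ι : Type*} [Fintype ι] (x y : ι → ℂ) :
    inC x ((outer y).mulVec x) = ((‖inC y x‖ ^ 2 : ℝ) : ℂ) := by
  have h : (outer y).mulVec x = fun p => y p * inC y x := by
    funext p
    simp [outer, Matrix.mulVec, dotProduct, Matrix.vecMulVec, inC, Finset.mul_sum, mul_assoc]
  rw [h]
  have h2 : inC x (fun p => y p * inC y x) = inC x y * inC y x := by
    simp [inC, Finset.sum_mul, mul_assoc]
  rw [h2, inC_conj_s8 x y, Complex.conj_mul']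
  simp [Complex.normSq_eq_norm_sq]

lemma norm_one_of_inC {ι : Type*} [Fintype ι] (x : ι → ℂ) (h : inC x x = 1) :
    ‖(WithLp.equiv 2 (ι → ℂ)).symm x‖ = 1 := by
  have h0 := inC_eq_inner x x
  rw [h] at h0
  have h3 := inner_self_eq_norm_sq (𝕜 := ℂ) ((WithLp.equiv 2 (ι → ℂ)).symm x)
  rw [← h0] at h3
  simp at h3
  have h2 : (‖(WithLp.equiv 2 (ι → ℂ)).symm x‖ : ℝ) ^ 2 = 1 := h3.symm
  nlinarith [norm_nonneg ((WithLp.equiv 2 (ι → ℂ)).symm x)]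

lemma bessel {k m : ℕ} (a : Fin k → Fin m → ℂ) (ha : ONFam a) (φ : Fin m → ℂ)
    (hφ : inC φ φ = 1) : ∑ i, ‖inC (a i) φ‖ ^ 2 ≤ 1 := by
  set v : Fin k → EuclideanSpace ℂ (Fin m) := fun i => (WithLp.equiv 2 _).symm (a i)
  have hv : Orthonormal ℂ v := by
    rw [orthonormal_iff_ite]
    intro i j
    rw [← inC_eq_inner]; exact ha i j
  have := hv.sum_inner_products_le ((WithLp.equiv 2 _).symm φ) (s := Finset.univ)
  calc ∑ i, ‖inC (a i) φ‖ ^ 2 = ∑ i, ‖inner ℂ (v i) ((WithLp.equiv 2 _).symm φ)‖ ^ 2 := by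
        refine Finset.sum_congr rfl fun i _ => ?_; rw [inC_eq_inner]
    _ ≤ ‖(WithLp.equiv 2 (Fin m → ℂ)).symm φ‖ ^ 2 := this
    _ = 1 := by rw [norm_one_of_inC φ hφ]; norm_num

lemma cs {k : ℕ} (x y : Fin k → ℂ) :
    ‖∑ i, x i * y i‖ ^ 2 ≤ (∑ i, ‖x i‖ ^ 2) * (∑ i, ‖y i‖ ^ 2) := by
  set u : EuclideanSpace ℂ (Fin k) := (WithLp.equiv 2 _).symm (star x)
  set w : EuclideanSpace ℂ (Fin k) := (WithLp.equiv 2 _).symm y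
  have h1 : inner ℂ u w = ∑ i, x i * y i := by
    simp [u, w, PiLp.inner_apply, RCLike.inner_apply, mul_comm]
  have h2 := norm_inner_le_norm (𝕜 := ℂ) u w
  have hu : ‖u‖ ^ 2 = ∑ i, ‖x i‖ ^ 2 := by
    rw [EuclideanSpace.norm_eq]
    rw [Real.sq_sqrt (by positivity)]
    simp [u]
  have hw : ‖w‖ ^ 2 = ∑ i, ‖y i‖ ^ 2 := by
    rw [EuclideanSpace.norm_eq]
    rw [Real.sq_sqrt (by positivity)]
    simp [w]
  calc ‖∑ i, x i * y i‖ ^ 2 = ‖inner (𝕜 := ℂ) u w‖ ^ 2 := by rw [h1]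
    _ ≤ (‖u‖ * ‖w‖) ^ 2 := by
        have := norm_nonneg (inner (𝕜 := ℂ) u w)
        nlinarith [h2]
    _ = (∑ i, ‖x i‖ ^ 2) * (∑ i, ‖y i‖ ^ 2) := by rw [mul_pow, hu, hw]

lemma inC_sum {ι σ : Type*} [Fintype ι] [Fintype σ] (x : ι → ℂ) (f : σ → ι → ℂ) :
    inC x (∑ i, f i) = ∑ i, inC x (f i) := by
  simp [inC, Finset.mul_sum]
  exact Finset.sum_comm

lemma inC_sum_left {ι σ : Type*} [Fintype ι] [Fintype σ] (x : ι → ℂ) (f : σ → ι → ℂ) :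
    inC (∑ i, f i) x = ∑ i, inC (f i) x := by
  simp [inC, Finset.sum_mul]
  exact Finset.sum_comm

set_option maxHeartbeats 1600000 in
/-- the witness `H = Σ_i |α_i⟩⟨α_i|⊗|β_i⟩⟨β_i| − dε|Ψ⟩⟨Ψ|` has
nonnegative expectation on every unit product state. -/
theorem witness_nonneg_on_product_states
    (m n s : ℕ) (hm : 0 < m) (hn : 0 < n)
    (α : Fin s → Fin m → ℂ) (β : Fin s → Fin n → ℂ)
    (hUPB : IsUPB α β)
    (ε : ℝ) (hε : 0 < ε)
    (hεmin : ∀ (a : Fin m → ℂ) (b : Fin n → ℂ), inC a a = 1 → inC b b = 1 →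
      ε ≤ ∑ i, ‖inC a (α i)‖ ^ 2 * ‖inC b (β i)‖ ^ 2)
    (hεatt : ∃ (a : Fin m → ℂ) (b : Fin n → ℂ), inC a a = 1 ∧ inC b b = 1 ∧
      ε = ∑ i, ‖inC a (α i)‖ ^ 2 * ‖inC b (β i)‖ ^ 2)
    (Ψ : Fin m × Fin n → ℂ) (hΨ : MaxEnt Ψ)
    (H : Matrix (Fin m × Fin n) (Fin m × Fin n) ℂ)
    (hH : H = (∑ i, outer (prodVec (α i) (β i))) -
      (((min m n : ℝ) * ε : ℝ) : ℂ) • outer Ψ)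
    (φA : Fin m → ℂ) (φB : Fin n → ℂ)
    (hφA : inC φA φA = 1) (hφB : inC φB φB = 1) :
    0 ≤ (inC (prodVec φA φB) (H.mulVec (prodVec φA φB))).re := by
  obtain ⟨a, b, ha, hb, hΨeq⟩ := hΨ
  have hdpos : (0:ℝ) < (min m n : ℕ) := by
    have := lt_min hm hn
    exact_mod_cast this
  set φ : Fin m × Fin n → ℂ := prodVec φA φB with hφdef
  -- expectation value splits
  have hsplit : inC φ (H.mulVec φ) =
      ((∑ i, ‖inC (prodVec (α i) (β i)) φ‖ ^ 2 : ℝ) : ℂ) -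
      (((min m n : ℝ) * ε : ℝ) : ℂ) * ((‖inC Ψ φ‖ ^ 2 : ℝ) : ℂ) := by
    rw [hH, Matrix.sub_mulVec, Matrix.smul_mulVec]
    have h1 : inC φ ((∑ i, outer (prodVec (α i) (β i))).mulVec φ -
        (((min m n : ℝ) * ε : ℝ) : ℂ) • (outer Ψ).mulVec φ) =
        inC φ ((∑ i, outer (prodVec (α i) (β i))).mulVec φ) -
        (((min m n : ℝ) * ε : ℝ) : ℂ) * inC φ ((outer Ψ).mulVec φ) := by
      simp only [inC, Pi.sub_apply, Pi.smul_apply, smul_eq_mul]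
      rw [Finset.mul_sum, ← Finset.sum_sub_distrib]
      refine Finset.sum_congr rfl fun p _ => ?_
      ring
    rw [h1, quad]
    have h2 : (∑ i, outer (prodVec (α i) (β i))).mulVec φ =
        ∑ i, (outer (prodVec (α i) (β i))).mulVec φ := by
      funext p
      simp only [Matrix.mulVec, dotProduct, Finset.sum_apply, Matrix.sum_apply,
        Finset.sum_mul]
      exact Finset.sum_comm
    rw [h2, inC_sum]
    have h4 : ∑ i, inC φ ((outer (prodVec (α i) (β i))).mulVec φ) =
        ((∑ i, ‖inC (prodVec (α i) (β i)) φ‖ ^ 2 : ℝ) : ℂ) := by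
      rw [Complex.ofReal_sum]
      exact Finset.sum_congr rfl fun i _ => quad φ (prodVec (α i) (β i))
    rw [h4]
  -- first term bound
  have key1 : ε ≤ ∑ i, ‖inC (prodVec (α i) (β i)) φ‖ ^ 2 := by
    have := hεmin φA φB hφA hφB
    calc ε ≤ ∑ i, ‖inC φA (α i)‖ ^ 2 * ‖inC φB (β i)‖ ^ 2 := this
      _ = ∑ i, ‖inC (prodVec (α i) (β i)) φ‖ ^ 2 := by
          refine Finset.sum_congr rfl fun i _ => ?_
          rw [hφdef, inC_prod]
          rw [norm_mul, mul_pow]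
          rw [inC_conj_s8 φA (α i), inC_conj_s8 φB (β i)]
          simp
  -- second term bound
  have key2 : ‖inC Ψ φ‖ ^ 2 ≤ 1 / (min m n : ℕ) := by
    have hcΨ : inC Ψ φ = ((Real.sqrt (min m n) : ℝ) : ℂ)⁻¹ *
        ∑ i, inC (a i) φA * inC (b i) φB := by
      have : inC Ψ φ = ((Real.sqrt (min m n) : ℝ) : ℂ)⁻¹ *
          inC (∑ i, prodVec (a i) (b i)) φ := by
        rw [hΨeq, inC, inC, Finset.mul_sum]
        refine Finset.sum_congr rfl fun p _ => ?_
        simp only [map_mul, map_inv₀, Complex.conj_ofReal]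
        ring
      rw [this, inC_sum_left]
      congr 1
      refine Finset.sum_congr rfl fun i _ => ?_
      rw [hφdef, inC_prod]
    rw [hcΨ, norm_mul, mul_pow]
    have hmn : ((m ⊓ n : ℕ) : ℝ) = ((m : ℝ) ⊓ (n : ℝ)) := by
      push_cast [Nat.cast_min]
      rfl
    have hnormc : ‖((Real.sqrt (min m n) : ℝ) : ℂ)⁻¹‖ ^ 2 = 1 / ((min m n : ℕ) : ℝ) := by
      rw [norm_inv, Complex.norm_real, Real.norm_eq_abs,
        abs_of_nonneg (Real.sqrt_nonneg _)]
      rw [inv_pow, Real.sq_sqrt (by rw [← hmn]; exact le_of_lt hdpos)]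
      rw [← hmn, one_div]
    rw [hnormc]
    have hcs := cs (fun i => inC (a i) φA) (fun i => inC (b i) φB)
    have hba := bessel a ha φA hφA
    have hbb := bessel b hb φB hφB
    have hbound : ‖∑ i, inC (a i) φA * inC (b i) φB‖ ^ 2 ≤ 1 := by
      calc ‖∑ i, inC (a i) φA * inC (b i) φB‖ ^ 2
          ≤ (∑ i, ‖inC (a i) φA‖ ^ 2) * (∑ i, ‖inC (b i) φB‖ ^ 2) := hcs
        _ ≤ 1 * 1 := by
            apply mul_le_mul hba hbb (Finset.sum_nonneg fun i _ => sq_nonneg _)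
              (le_trans (Finset.sum_nonneg fun i _ => sq_nonneg _) hba)
        _ = 1 := by norm_num
    calc 1 / ((min m n : ℕ):ℝ) * ‖∑ i, inC (a i) φA * inC (b i) φB‖ ^ 2
        ≤ 1 / ((min m n : ℕ):ℝ) * 1 := by
          apply mul_le_mul_of_nonneg_left hbound (by
            apply div_nonneg zero_le_one (le_of_lt hdpos))
      _ = 1 / ((min m n : ℕ):ℝ) := by ring
  -- combine
  rw [hsplit]
  have hre : (((∑ i, ‖inC (prodVec (α i) (β i)) φ‖ ^ 2 : ℝ) : ℂ) -
      (((min m n : ℝ) * ε : ℝ) : ℂ) * ((‖inC Ψ φ‖ ^ 2 : ℝ) : ℂ)).re =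
      (∑ i, ‖inC (prodVec (α i) (β i)) φ‖ ^ 2) -
      ((min m n : ℝ) * ε) * (‖inC Ψ φ‖ ^ 2) := by
    rw [← Complex.ofReal_mul, ← Complex.ofReal_sub, Complex.ofReal_re]
  rw [hre]
  have h3 : ((min m n : ℝ) * ε) * (‖inC Ψ φ‖ ^ 2) ≤ ε := by
    have : ((min m n : ℝ) * ε) * (‖inC Ψ φ‖ ^ 2) ≤
        ((min m n : ℝ) * ε) * (1 / (min m n : ℕ)) := by
      apply mul_le_mul_of_nonneg_left key2
      positivity
    calc ((min m n : ℝ) * ε) * (‖inC Ψ φ‖ ^ 2)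
        ≤ ((min m n : ℝ) * ε) * (1 / (min m n : ℕ)) := this
      _ = ε := by
          field_simp
          rw [Nat.cast_min]
  linarith
end
end
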